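/- For n ≥ 1 and a prime p with p | n, the spectral distortion satisfies SD(Φ_{np}) = SD(Φ_n), where SD(f) = |det M_f|^{1/deg f} / σ_min(M_f). Consequently SD(Φ_n) = SD(Φ_{rad(n)}) for all n. -/

import Mathlib

open Finset Matrix

/-- The radical of a natural number: the product of its distinct prime factors. -/
def radical (n : ℕ) : ℕ := ∏ p ∈ n.primeFactors, p

/-- The Vandermonde matrix of the `n`-th cyclotomic polynomial. -/
noncomputable def cycVdm (n : ℕ) : Matrix (Fin n.totient) (Fin n.totient) ℂ :=
  fun i t => Complex.exp (2 * Real.pi * Complex.I *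
      ((({a ∈ Finset.range n | n.Coprime a}).orderIsoOfFin rfl t : ℕ) : ℂ) / (n : ℂ))
    ^ (i : ℕ)

/-- The smallest singular value of a square complex matrix. -/
noncomputable def sigmaMin {n : ℕ} (A : Matrix (Fin n) (Fin n) ℂ) : ℝ :=
  Real.sqrt (⨅ i, (Matrix.isHermitian_conjTranspose_mul_self A).eigenvalues i)

/-- The spectral distortion `SD(Φ_n) = |det M_{Φ_n}|^{1/φ(n)} / σ_min(M_{Φ_n})`. -/
noncomputable def SD (n : ℕ) : ℝ :=
  ‖(cycVdm n).det‖ ^ ((1 : ℝ) / (n.totient : ℝ)) / sigmaMin (cycVdm n)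

namespace SDAux
open Pointwise
noncomputable def aIdx (n : ℕ) (s : Fin n.totient) : ℕ :=
  (({a ∈ Finset.range n | n.Coprime a}).orderIsoOfFin rfl s : ℕ)
lemma aIdx_mem (n : ℕ) (s : Fin n.totient) :
    aIdx n s ∈ {a ∈ Finset.range n | n.Coprime a} :=
  (({a ∈ Finset.range n | n.Coprime a}).orderIsoOfFin rfl s).2
lemma aIdx_lt (n : ℕ) (s : Fin n.totient) : aIdx n s < n := by
  have := aIdx_mem n s
  simp only [Finset.mem_filter, Finset.mem_range] at this
  exact this.1
lemma aIdx_coprime (n : ℕ) (s : Fin n.totient) : n.Coprime (aIdx n s) := by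
  have := aIdx_mem n s
  simp only [Finset.mem_filter, Finset.mem_range] at this
  exact this.2
lemma aIdx_inj (n : ℕ) : Function.Injective (aIdx n) := by
  intro s t h
  exact (({a ∈ Finset.range n | n.Coprime a}).orderIsoOfFin rfl).injective (Subtype.ext h)

lemma totient_eq (n p : ℕ) (hp : p.Prime) (hpn : p ∣ n) :
    (n * p).totient = n.totient * p := by
  rw [mul_comm n p, Nat.totient_mul_of_prime_of_dvd hp hpn, mul_comm]

lemma exists_colEquiv (n p : ℕ) (hn : 0 < n) (hp : p.Prime) (hpn : p ∣ n) :
    ∃ e : Fin ((n * p).totient) ≃ (Fin n.totient × Fin p),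
      ∀ t, aIdx (n * p) t = ((e t).2 : ℕ) * n + aIdx n (e t).1 := by
  have hmem : ∀ (s : Fin n.totient) (q : Fin p),
      (q : ℕ) * n + aIdx n s ∈ {a ∈ Finset.range (n * p) | (n * p).Coprime a} := by
    intro s q
    simp only [Finset.mem_filter, Finset.mem_range]
    constructor
    · calc (q : ℕ) * n + aIdx n s < (q : ℕ) * n + n := Nat.add_lt_add_left (aIdx_lt n s) _
        _ = ((q : ℕ) + 1) * n := by ring
        _ ≤ p * n := Nat.mul_le_mul_right n q.2
        _ = n * p := Nat.mul_comm p n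
    · have hcopn : n.Coprime ((q : ℕ) * n + aIdx n s) := by
        rw [add_comm]
        exact (Nat.coprime_add_mul_right_right n (aIdx n s) q).mpr (aIdx_coprime n s)
      exact Nat.coprime_mul_iff_left.mpr
        ⟨hcopn, Nat.Coprime.coprime_dvd_left hpn hcopn⟩
  let g : Fin n.totient × Fin p → Fin ((n * p).totient) := fun sq =>
    (({a ∈ Finset.range (n * p) | (n * p).Coprime a}).orderIsoOfFin rfl).symm
      ⟨(sq.2 : ℕ) * n + aIdx n sq.1, hmem sq.1 sq.2⟩
  have hval : ∀ sq, aIdx (n * p) (g sq) = (sq.2 : ℕ) * n + aIdx n sq.1 := by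
    intro sq
    show ((({a ∈ Finset.range (n * p) | (n * p).Coprime a}).orderIsoOfFin rfl) (g sq) : ℕ) = _
    simp only [g, OrderIso.apply_symm_apply]
  have hginj : Function.Injective g := by
    intro a b hab
    have h1 : (a.2 : ℕ) * n + aIdx n a.1 = (b.2 : ℕ) * n + aIdx n b.1 := by
      rw [← hval a, ← hval b, hab]
    have ha := aIdx_lt n a.1
    have hb := aIdx_lt n b.1
    have h1' : aIdx n a.1 + (a.2 : ℕ) * n = aIdx n b.1 + (b.2 : ℕ) * n := by omega
    have h2 : aIdx n a.1 = aIdx n b.1 := by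
      have := congrArg (· % n) h1'
      simpa only [Nat.add_mul_mod_self_right, Nat.mod_eq_of_lt ha, Nat.mod_eq_of_lt hb] using this
    have h3 : (a.2 : ℕ) = (b.2 : ℕ) := by
      have h4 : (a.2 : ℕ) * n = (b.2 : ℕ) * n := by omega
      exact Nat.eq_of_mul_eq_mul_right hn h4
    exact Prod.ext (aIdx_inj n h2) (Fin.ext h3)
  have hbij : Function.Bijective g := by
    rw [Fintype.bijective_iff_injective_and_card]
    refine ⟨hginj, ?_⟩
    simp [totient_eq n p hp hpn, Nat.mul_comm]
  refine ⟨(Equiv.ofBijective g hbij).symm, fun t => ?_⟩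
  have h : g ((Equiv.ofBijective g hbij).symm t) = t := (Equiv.ofBijective g hbij).apply_symm_apply t
  have h2 := hval ((Equiv.ofBijective g hbij).symm t)
  rwa [h] at h2

noncomputable def zeta (n p : ℕ) (sq : Fin n.totient × Fin p) : ℂ :=
  Complex.exp (2 * Real.pi * Complex.I * (((sq.2 : ℕ) * n + aIdx n sq.1 : ℕ) : ℂ) / ((n * p : ℕ) : ℂ))

lemma zeta_pow_p (n p : ℕ) (hn : n ≠ 0) (hp : p ≠ 0) (s : Fin n.totient) (q : Fin p) :
    zeta n p (s, q) ^ p = Complex.exp (2 * Real.pi * Complex.I * ((aIdx n s : ℕ) : ℂ) / (n : ℂ)) := by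
  rw [zeta, ← Complex.exp_nat_mul]
  have harg : (p : ℂ) * (2 * Real.pi * Complex.I * (((q : ℕ) * n + aIdx n s : ℕ) : ℂ) / ((n * p : ℕ) : ℂ))
      = 2 * Real.pi * Complex.I * ((aIdx n s : ℕ) : ℂ) / (n : ℂ) + ((q : ℕ) : ℤ) * (2 * Real.pi * Complex.I) := by
    have hn' : (n : ℂ) ≠ 0 := Nat.cast_ne_zero.mpr hn
    have hp' : (p : ℂ) ≠ 0 := Nat.cast_ne_zero.mpr hp
    push_cast
    field_simp
    ring
  rw [harg, Complex.exp_add, Complex.exp_int_mul_two_pi_mul_I, mul_one]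

lemma conj_zeta_mul_zeta (n p : ℕ) (hn : n ≠ 0) (hp : p ≠ 0) (s : Fin n.totient) (q q' : Fin p) :
    (starRingEnd ℂ) (zeta n p (s, q)) * zeta n p (s, q')
      = Complex.exp (((((q' : ℕ) : ℤ) - ((q : ℕ) : ℤ) : ℤ) : ℂ) * (2 * Real.pi * Complex.I) / (p : ℂ)) := by
  rw [zeta, zeta, ← Complex.exp_conj, ← Complex.exp_add]
  congr 1
  have hc : (starRingEnd ℂ) (2 * Real.pi * Complex.I * (((q : ℕ) * n + aIdx n s : ℕ) : ℂ) / ((n * p : ℕ) : ℂ))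
      = -(2 * Real.pi * Complex.I * (((q : ℕ) * n + aIdx n s : ℕ) : ℂ) / ((n * p : ℕ) : ℂ)) := by
    simp [map_div₀, Complex.conj_I, Complex.conj_ofReal, map_ofNat]
    ring
  rw [hc]
  have hn' : (n : ℂ) ≠ 0 := Nat.cast_ne_zero.mpr hn
  have hp' : (p : ℂ) ≠ 0 := Nat.cast_ne_zero.mpr hp
  push_cast
  field_simp
  ring

lemma sum_conj_zeta (n p : ℕ) (hn : n ≠ 0) (hp : p ≠ 0) (s : Fin n.totient) (q q' : Fin p) :
    ∑ r : Fin p, ((starRingEnd ℂ) (zeta n p (s, q)) * zeta n p (s, q')) ^ (r : ℕ)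
      = if q = q' then (p : ℂ) else 0 := by
  rw [conj_zeta_mul_zeta n p hn hp s q q']
  set d : ℤ := (((q' : ℕ) : ℤ) - ((q : ℕ) : ℤ) : ℤ) with hd
  set w : ℂ := Complex.exp ((d : ℂ) * (2 * Real.pi * Complex.I) / (p : ℂ)) with hw
  have hp' : (p : ℂ) ≠ 0 := Nat.cast_ne_zero.mpr hp
  have hsum : ∑ r : Fin p, w ^ (r : ℕ) = ∑ r ∈ Finset.range p, w ^ r :=
    Fin.sum_univ_eq_sum_range _ p
  by_cases hqq : q = q'
  · have hd0 : d = 0 := by simp [hd, hqq]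
    have hw1 : w = 1 := by rw [hw, hd0]; simp
    rw [if_pos hqq, hsum, hw1]
    simp
  · rw [if_neg hqq, hsum]
    have hwp : w ^ p = 1 := by
      rw [hw, ← Complex.exp_nat_mul]
      have : (p : ℂ) * ((d : ℂ) * (2 * Real.pi * Complex.I) / (p : ℂ)) = (d : ℂ) * (2 * Real.pi * Complex.I) := by
        field_simp
      rw [this, Complex.exp_int_mul_two_pi_mul_I]
    have hw1 : w ≠ 1 := by
      intro hcon
      rw [hw, Complex.exp_eq_one_iff] at hcon
      obtain ⟨k, hk⟩ := hcon
      have h2pi : (2 * (Real.pi : ℂ) * Complex.I) ≠ 0 := by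
        simp [Real.pi_ne_zero, Complex.I_ne_zero]
      have hdk : (d : ℂ) = (k : ℂ) * (p : ℂ) := by
        field_simp at hk
        have hk2 : (d : ℂ) * (2 * (Real.pi : ℂ) * Complex.I) = ((k : ℂ) * (p : ℂ)) * (2 * (Real.pi : ℂ) * Complex.I) := by
          rw [hk]; ring
        exact mul_right_cancel₀ h2pi hk2
      have hdk' : d = k * p := by exact_mod_cast hdk
      have hpd : (p : ℤ) ∣ d := ⟨k, by rw [hdk']; ring⟩
      have habs : |d| < (p : ℤ) := by
        have := q.2; have := q'.2; rw [hd]; rw [abs_lt]; omega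
      have := Int.eq_zero_of_abs_lt_dvd hpd habs
      apply hqq
      apply Fin.ext
      omega
    rw [geom_sum_eq hw1, hwp]
    simp

noncomputable def Mt (n p : ℕ) : Matrix (Fin ((n * p).totient)) (Fin n.totient × Fin p) ℂ :=
  fun i sq => zeta n p sq ^ (i : ℕ)

noncomputable def Xm (n p : ℕ) : Matrix (Fin n.totient × Fin p) (Fin n.totient × Fin p) ℂ :=
  fun c sq => if c.1 = sq.1 then zeta n p sq ^ (c.2 : ℕ) else 0

noncomputable def Ym (n p : ℕ) : Matrix (Fin n.totient × Fin p) (Fin n.totient × Fin p) ℂ :=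
  fun mr sq => if mr.2 = sq.2 then cycVdm n mr.1 sq.1 else 0

lemma cycVdm_np_eq (n p : ℕ) (hn : 0 < n) (hp : p.Prime) (hpn : p ∣ n)
    (e : Fin ((n * p).totient) ≃ (Fin n.totient × Fin p))
    (he : ∀ t, aIdx (n * p) t = ((e t).2 : ℕ) * n + aIdx n (e t).1) :
    cycVdm (n * p) = (Mt n p).submatrix id e := by
  funext i t
  show Complex.exp (2 * Real.pi * Complex.I * ((aIdx (n * p) t : ℕ) : ℂ) / ((n * p : ℕ) : ℂ)) ^ (i : ℕ) = _
  rw [he t]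
  rfl

lemma Mt_factor (n p : ℕ) (hn : 0 < n) (hp : p.Prime) (hpn : p ∣ n)
    (ρ : (Fin n.totient × Fin p) ≃ Fin ((n * p).totient))
    (hρ : ∀ mr : Fin n.totient × Fin p, ((ρ mr : Fin ((n*p).totient)) : ℕ) = (mr.2 : ℕ) + p * (mr.1 : ℕ)) :
    (Mt n p).submatrix ρ id = Ym n p * Xm n p := by
  funext mr sq
  obtain ⟨m, r⟩ := mr
  obtain ⟨s, q⟩ := sq
  show Mt n p (ρ (m, r)) (s, q) = _
  have lhs : Mt n p (ρ (m, r)) (s, q)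
      = zeta n p (s, q) ^ (r : ℕ) * cycVdm n m s := by
    rw [Mt, hρ (m, r)]
    rw [pow_add, pow_mul, zeta_pow_p n p hn.ne' hp.pos.ne' s q]
    rfl
  rw [lhs, Matrix.mul_apply]
  rw [Fintype.sum_prod_type]
  simp only [Ym, Xm, ite_mul, zero_mul, mul_ite, mul_zero]
  rw [Finset.sum_comm]
  simp [Finset.sum_ite_eq, Finset.sum_ite_eq', mul_comm]

lemma XmH_Xm (n p : ℕ) (hn : 0 < n) (hp : p.Prime) :
    (Xm n p)ᴴ * Xm n p = (p : ℂ) • (1 : Matrix (Fin n.totient × Fin p) (Fin n.totient × Fin p) ℂ) := by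
  funext sq sq'
  obtain ⟨s, q⟩ := sq
  obtain ⟨s', q'⟩ := sq'
  rw [Matrix.mul_apply]
  simp only [Matrix.conjTranspose_apply, Xm, Complex.star_def]
  rw [Fintype.sum_prod_type]
  by_cases hss : s = s'
  · subst hss
    have h1 : ∀ c1 : Fin n.totient, ∀ c2 : Fin p,
        (starRingEnd ℂ) (if c1 = s then zeta n p (s, q) ^ (c2 : ℕ) else 0) *
          (if c1 = s then zeta n p (s, q') ^ (c2 : ℕ) else 0)
        = if c1 = s then ((starRingEnd ℂ) (zeta n p (s, q)) * zeta n p (s, q')) ^ (c2 : ℕ) else 0 := by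
      intro c1 c2
      split <;> simp [mul_pow, map_pow]
    simp only [h1]
    have h2 : ∀ c1 : Fin n.totient,
        (∑ c2 : Fin p, if c1 = s then ((starRingEnd ℂ) (zeta n p (s, q)) * zeta n p (s, q')) ^ (c2 : ℕ) else 0)
        = if c1 = s then ∑ c2 : Fin p, ((starRingEnd ℂ) (zeta n p (s, q)) * zeta n p (s, q')) ^ (c2 : ℕ) else 0 := by
      intro c1; split <;> simp
    rw [Finset.sum_congr rfl (fun c1 _ => h2 c1), Finset.sum_ite_eq' Finset.univ s]
    rw [if_pos (Finset.mem_univ s), sum_conj_zeta n p hn.ne' hp.pos.ne' s q q']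
    by_cases hqq : q = q'
    · subst hqq; simp [Matrix.one_apply]
    · have : ((s, q) : Fin n.totient × Fin p) ≠ (s, q') := by
        simp [Prod.ext_iff, hqq]
      simp [Matrix.one_apply, this, hqq]
  · have h1 : ∀ c1 : Fin n.totient, ∀ c2 : Fin p,
        (starRingEnd ℂ) (if c1 = s then zeta n p (s, q) ^ (c2 : ℕ) else 0) *
          (if c1 = s' then zeta n p (s', q') ^ (c2 : ℕ) else 0) = 0 := by
      intro c1 c2
      by_cases hc1 : c1 = s
      · rw [if_neg (fun hc2 : c1 = s' => hss (hc1.symm.trans hc2)), mul_zero]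
      · rw [if_neg hc1, map_zero, zero_mul]
    simp only [h1, Finset.sum_const_zero]
    have : ((s, q) : Fin n.totient × Fin p) ≠ (s', q') := by
      simp [Prod.ext_iff, hss]
    simp [Matrix.one_apply, this]

lemma YmH_Ym (n p : ℕ) :
    (Ym n p)ᴴ * Ym n p
      = Matrix.blockDiagonal (fun _ : Fin p => (cycVdm n)ᴴ * cycVdm n) := by
  funext sq sq'
  obtain ⟨s, q⟩ := sq
  obtain ⟨s', q'⟩ := sq'
  rw [Matrix.mul_apply]
  simp only [Matrix.conjTranspose_apply, Ym, Matrix.blockDiagonal_apply]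
  rw [Fintype.sum_prod_type]
  by_cases hqq : q = q'
  · subst hqq
    have h1 : ∀ m : Fin n.totient, ∀ r : Fin p,
        star (if r = q then cycVdm n m s else 0) * (if r = q then cycVdm n m s' else 0)
        = if r = q then star (cycVdm n m s) * cycVdm n m s' else 0 := by
      intro m r; split <;> simp
    simp only [h1]
    have h2 : ∀ m : Fin n.totient,
        (∑ r : Fin p, if r = q then star (cycVdm n m s) * cycVdm n m s' else 0)
        = star (cycVdm n m s) * cycVdm n m s' := by
      intro m; simp
    rw [Finset.sum_congr rfl (fun m _ => h2 m)]
    simp [Matrix.mul_apply, Matrix.conjTranspose_apply]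
  · have h1 : ∀ m : Fin n.totient, ∀ r : Fin p,
        star (if r = q then cycVdm n m s else 0) * (if r = q' then cycVdm n m s' else 0) = 0 := by
      intro m r
      by_cases hr : r = q
      · rw [if_neg (fun hc : r = q' => hqq (hr.symm.trans hc)), mul_zero]
      · rw [if_neg hr, star_zero, zero_mul]
    simp only [h1, Finset.sum_const_zero, if_neg hqq]

lemma gram_eq (n p : ℕ) (hn : 0 < n) (hp : p.Prime) (hpn : p ∣ n) :
    ∃ e : Fin ((n * p).totient) ≃ (Fin n.totient × Fin p),
      (cycVdm (n * p))ᴴ * cycVdm (n * p)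
        = (((Xm n p)ᴴ * ((Ym n p)ᴴ * Ym n p)) * Xm n p).submatrix e e := by
  obtain ⟨e, he⟩ := exists_colEquiv n p hn hp hpn
  refine ⟨e, ?_⟩
  let ρ : (Fin n.totient × Fin p) ≃ Fin ((n * p).totient) :=
    finProdFinEquiv.trans (finCongr (totient_eq n p hp hpn).symm)
  have hρ : ∀ mr : Fin n.totient × Fin p, ((ρ mr) : ℕ) = (mr.2 : ℕ) + p * (mr.1 : ℕ) := by
    intro mr
    simp [ρ, finProdFinEquiv, finCongr]
  have hfac := Mt_factor n p hn hp hpn ρ hρ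
  have hMt : Mt n p = (Ym n p * Xm n p).submatrix ρ.symm id := by
    rw [← hfac]
    funext i sq
    simp [Matrix.submatrix_apply]
  have hfull : cycVdm (n * p) = (Ym n p * Xm n p).submatrix ρ.symm e := by
    rw [cycVdm_np_eq n p hn hp hpn e he, hMt]
    funext i t
    simp [Matrix.submatrix_apply]
  rw [hfull, Matrix.conjTranspose_submatrix, Matrix.submatrix_mul_equiv]
  rw [Matrix.conjTranspose_mul, Matrix.mul_assoc, Matrix.mul_assoc, Matrix.mul_assoc]

lemma det_char (n p : ℕ) (hn : 0 < n) (hp : p.Prime) (hpn : p ∣ n) (z : ℂ) :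
    (z • (1 : Matrix (Fin ((n * p).totient)) (Fin ((n * p).totient)) ℂ)
        - (cycVdm (n * p))ᴴ * cycVdm (n * p)).det
      = (p : ℂ) ^ ((n * p).totient)
        * ((z / p) • (1 : Matrix (Fin n.totient) (Fin n.totient) ℂ) - (cycVdm n)ᴴ * cycVdm n).det ^ p := by
  obtain ⟨e, hGram⟩ := gram_eq n p hn hp hpn
  have hp' : (p : ℂ) ≠ 0 := Nat.cast_ne_zero.mpr hp.pos.ne'
  set B := (Ym n p)ᴴ * Ym n p with hB
  have h0 : z • (1 : Matrix (Fin ((n * p).totient)) (Fin ((n * p).totient)) ℂ)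
      - (((Xm n p)ᴴ * B) * Xm n p).submatrix e e
      = ((z • 1 - ((Xm n p)ᴴ * B) * Xm n p).submatrix e e) := by
    funext a b
    simp [Matrix.submatrix_apply, Matrix.sub_apply, Matrix.smul_apply, Matrix.one_apply,
      EmbeddingLike.apply_eq_iff_eq]
  rw [hGram, h0, Matrix.det_submatrix_equiv_self]
  have hXX := XmH_Xm n p hn hp
  have key : (Xm n p)ᴴ * ((z / p) • 1 - B) * Xm n p = z • 1 - ((Xm n p)ᴴ * B) * Xm n p := by
    rw [Matrix.mul_sub, Matrix.sub_mul]
    congr 1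
    calc (Xm n p)ᴴ * ((z / p) • 1) * Xm n p
        = (z / p) • ((Xm n p)ᴴ * 1 * Xm n p) := by
          rw [Matrix.mul_smul, Matrix.smul_mul]
      _ = (z / p) • ((Xm n p)ᴴ * Xm n p) := by rw [Matrix.mul_one]
      _ = (z / p) • ((p : ℂ) • 1) := by rw [hXX]
      _ = z • 1 := by rw [smul_smul, div_mul_cancel₀ z hp']
  rw [← key, Matrix.det_mul, Matrix.det_mul]
  have hre : ((Xm n p)ᴴ).det * ((z / p) • 1 - B).det * (Xm n p).det
      = ((z / p) • 1 - B).det * (((Xm n p)ᴴ).det * (Xm n p).det) := by ring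
  rw [hre, ← Matrix.det_mul, hXX, Matrix.det_smul, Matrix.det_one, mul_one]
  rw [hB, YmH_Ym]
  have hbd : (z / p) • (1 : Matrix (Fin n.totient × Fin p) (Fin n.totient × Fin p) ℂ)
      - Matrix.blockDiagonal (fun _ : Fin p => (cycVdm n)ᴴ * cycVdm n)
      = Matrix.blockDiagonal (fun _ : Fin p =>
          (z / p) • 1 - (cycVdm n)ᴴ * cycVdm n) := by
    ext ⟨i, k⟩ ⟨j, k'⟩
    simp only [Matrix.sub_apply, Matrix.smul_apply, Matrix.one_apply,
      Matrix.blockDiagonal_apply, Prod.mk.injEq, smul_eq_mul]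
    by_cases hk : k = k'
    · subst hk
      by_cases hij : i = j <;> simp [hij]
    · simp [hk]
  rw [hbd, Matrix.det_blockDiagonal, Finset.prod_const, Finset.card_univ, Fintype.card_fin]
  have hcard : Fintype.card (Fin n.totient × Fin p) = (n * p).totient := by
    simp [totient_eq n p hp hpn]
  rw [hcard, mul_comm]

lemma det_root_iff {k : ℕ} (A : Matrix (Fin k) (Fin k) ℂ) (hA : A.IsHermitian) (x : ℝ) :
    ((x : ℂ) • (1 : Matrix (Fin k) (Fin k) ℂ) - A).det = 0 ↔ ∃ i, hA.eigenvalues i = x := by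
  set U : Matrix (Fin k) (Fin k) ℂ := (Matrix.IsHermitian.eigenvectorUnitary hA : Matrix (Fin k) (Fin k) ℂ) with hU
  have hUU : U * star U = 1 :=
    Matrix.mem_unitaryGroup_iff.mp (Matrix.IsHermitian.eigenvectorUnitary hA).2
  set D : Matrix (Fin k) (Fin k) ℂ := Matrix.diagonal (RCLike.ofReal ∘ hA.eigenvalues) with hD
  have hspec : A = U * D * star U := hA.spectral_theorem
  have key : (x : ℂ) • (1 : Matrix (Fin k) (Fin k) ℂ) - A = U * ((x : ℂ) • 1 - D) * star U := by
    have hx1 : U * ((x : ℂ) • 1) * star U = (x : ℂ) • (1 : Matrix (Fin k) (Fin k) ℂ) := by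
      calc U * ((x : ℂ) • 1) * star U = (x : ℂ) • (U * 1 * star U) := by
            rw [Matrix.mul_smul, Matrix.smul_mul]
        _ = (x : ℂ) • (1 : Matrix (Fin k) (Fin k) ℂ) := by rw [Matrix.mul_one, hUU]
    rw [Matrix.mul_sub, Matrix.sub_mul, hx1, ← hspec]
  rw [key, Matrix.det_mul, Matrix.det_mul]
  have hUdet : U.det * (star U).det = 1 := by rw [← Matrix.det_mul, hUU, Matrix.det_one]
  have hre : U.det * ((x : ℂ) • 1 - D).det * (star U).det
      = ((x : ℂ) • 1 - D).det * (U.det * (star U).det) := by ring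
  rw [hre, hUdet, mul_one]
  have hdiag : (x : ℂ) • (1 : Matrix (Fin k) (Fin k) ℂ) - D
      = Matrix.diagonal (fun i => (x : ℂ) - (hA.eigenvalues i : ℂ)) := by
    rw [hD]
    ext i j
    by_cases hij : i = j <;>
      simp [Matrix.diagonal, Matrix.one_apply, hij, RCLike.ofReal, Function.comp]
  rw [hdiag, Matrix.det_diagonal]
  rw [Finset.prod_eq_zero_iff]
  constructor
  · rintro ⟨i, -, hi⟩
    exact ⟨i, by exact_mod_cast (sub_eq_zero.mp hi).symm⟩
  · rintro ⟨i, hi⟩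
    exact ⟨i, Finset.mem_univ i, by rw [← hi]; ring⟩

lemma abs_det_gram {k : ℕ} (M : Matrix (Fin k) (Fin k) ℂ) :
    ‖(Mᴴ * M).det‖ = ‖M.det‖ ^ 2 := by
  rw [Matrix.det_mul, Matrix.det_conjTranspose, norm_mul]
  rw [norm_star]
  ring

lemma SD_mul_prime (n p : ℕ) (hn : 1 ≤ n) (hp : p.Prime) (hpn : p ∣ n) :
    SD (n * p) = SD n := by
  have hn0 : 0 < n := hn
  have hφ : 0 < n.totient := Nat.totient_pos.mpr hn0
  have hN : (n * p).totient = n.totient * p := totient_eq n p hp hpn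
  have hp0 : 0 < p := hp.pos
  have hNpos : 0 < (n * p).totient := by rw [hN]; positivity
  -- determinant of the Gram matrices
  have habs : ‖((cycVdm (n * p))ᴴ * cycVdm (n * p)).det‖
      = (p : ℝ) ^ ((n * p).totient) * ‖((cycVdm n)ᴴ * cycVdm n).det‖ ^ p := by
    have h := det_char n p hn0 hp hpn 0
    rw [zero_smul, zero_sub, zero_div, zero_smul, zero_sub, Matrix.det_neg, Matrix.det_neg] at h
    have h2 := congrArg (‖·‖) h
    simpa [norm_mul, norm_pow, mul_pow] using h2
  -- numerator scaling
  set c : ℝ := ‖(cycVdm n).det‖ with hc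
  set C : ℝ := ‖(cycVdm (n * p)).det‖ with hC
  have hcnn : 0 ≤ c := norm_nonneg _
  have hCnn : 0 ≤ C := norm_nonneg _
  have hC2 : C ^ 2 = (p : ℝ) ^ ((n * p).totient) * c ^ (2 * p) := by
    calc C ^ 2 = ‖((cycVdm (n * p))ᴴ * cycVdm (n * p)).det‖ := (abs_det_gram _).symm
      _ = (p : ℝ) ^ ((n * p).totient) * ‖((cycVdm n)ᴴ * cycVdm n).det‖ ^ p := habs
      _ = (p : ℝ) ^ ((n * p).totient) * (c ^ 2) ^ p := by rw [abs_det_gram]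
      _ = (p : ℝ) ^ ((n * p).totient) * c ^ (2 * p) := by rw [← pow_mul]
  set N : ℕ := (n * p).totient with hNdef
  set φ : ℕ := n.totient with hφdef
  have hNR : (N : ℝ) = (φ : ℝ) * p := by exact_mod_cast hN
  have hNne : (N : ℝ) ≠ 0 := by positivity
  have hφne : (φ : ℝ) ≠ 0 := by positivity
  have hpne : (p : ℝ) ≠ 0 := by positivity
  have hnum : C ^ ((1 : ℝ) / (N : ℝ)) = Real.sqrt p * c ^ ((1 : ℝ) / (φ : ℝ)) := by
    have e1 : (C ^ ((1 : ℝ) / (N : ℝ))) ^ (2 : ℕ) = (p : ℝ) * c ^ ((2 : ℝ) / (φ : ℝ)) := by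
      rw [← Real.rpow_natCast (C ^ ((1 : ℝ) / (N : ℝ))) 2, ← Real.rpow_mul hCnn]
      have : (1 : ℝ) / (N : ℝ) * (2 : ℕ) = 2 / (N : ℝ) := by push_cast; ring
      rw [this]
      have hC' : C = (C ^ (2 : ℕ)) ^ ((1 : ℝ) / 2 : ℝ) := by
        rw [← Real.rpow_natCast C 2, ← Real.rpow_mul hCnn]
        norm_num
      conv_lhs => rw [hC']
      rw [← Real.rpow_mul (by positivity), hC2]
      rw [Real.mul_rpow (by positivity) (by positivity)]
      rw [← Real.rpow_natCast (p : ℝ) N, ← Real.rpow_natCast c (2 * p)]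
      rw [← Real.rpow_mul (by positivity), ← Real.rpow_mul hcnn]
      congr 1
      · rw [show (N : ℝ) * (1 / 2 * (2 / (N : ℝ))) = 1 by field_simp, Real.rpow_one]
      · congr 1
        rw [hNR]
        push_cast
        field_simp
    have e2 : (Real.sqrt p * c ^ ((1 : ℝ) / (φ : ℝ))) ^ (2 : ℕ) = (p : ℝ) * c ^ ((2 : ℝ) / (φ : ℝ)) := by
      rw [mul_pow, Real.sq_sqrt (by positivity)]
      congr 1
      rw [← Real.rpow_natCast (c ^ ((1 : ℝ) / (φ : ℝ))) 2, ← Real.rpow_mul hcnn]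
      congr 1
      push_cast; ring
    have e3 : (C ^ ((1 : ℝ) / (N : ℝ))) ^ (2 : ℕ) = (Real.sqrt p * c ^ ((1 : ℝ) / (φ : ℝ))) ^ (2 : ℕ) := by
      rw [e1, e2]
    have h4 : (0 : ℝ) ≤ C ^ ((1 : ℝ) / (N : ℝ)) := Real.rpow_nonneg hCnn _
    have h5 : (0 : ℝ) ≤ Real.sqrt p * c ^ ((1 : ℝ) / (φ : ℝ)) := by positivity
    calc C ^ ((1 : ℝ) / (N : ℝ)) = Real.sqrt ((C ^ ((1 : ℝ) / (N : ℝ))) ^ 2) := (Real.sqrt_sq h4).symm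
      _ = Real.sqrt ((Real.sqrt p * c ^ ((1 : ℝ) / (φ : ℝ))) ^ 2) := by rw [e3]
      _ = Real.sqrt p * c ^ ((1 : ℝ) / (φ : ℝ)) := Real.sqrt_sq h5
  -- eigenvalue scaling
  have hherm_np := Matrix.isHermitian_conjTranspose_mul_self (cycVdm (n * p))
  have hherm_n := Matrix.isHermitian_conjTranspose_mul_self (cycVdm n)
  have hrange : ∀ x : ℝ, (∃ i, hherm_np.eigenvalues i = x) ↔ (∃ i, hherm_n.eigenvalues i = x / p) := by
    intro x
    rw [← det_root_iff _ hherm_np x, ← det_root_iff _ hherm_n (x / p)]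
    have h := det_char n p hn0 hp hpn (x : ℂ)
    have hcast : ((x : ℝ) : ℂ) / (p : ℂ) = (((x / p : ℝ)) : ℂ) := by push_cast; ring
    rw [hcast] at h
    rw [h]
    have hz : ((p : ℂ) ^ ((n * p).totient) ≠ 0) := pow_ne_zero _ (Nat.cast_ne_zero.mpr hp0.ne')
    constructor
    · intro h0
      rcases mul_eq_zero.mp h0 with h1 | h1
      · exact absurd h1 hz
      · exact pow_eq_zero_iff hp0.ne' |>.mp h1
    · intro h0
      rw [h0]
      simp [zero_pow hp0.ne']
  have hset : Set.range hherm_np.eigenvalues = (p : ℝ) • Set.range hherm_n.eigenvalues := by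
    ext x
    rw [Set.mem_smul_set_iff_inv_smul_mem₀ (by positivity : (p : ℝ) ≠ 0)]
    simp only [Set.mem_range, smul_eq_mul]
    rw [inv_mul_eq_div]
    exact hrange x
  have hinf : (⨅ i, hherm_np.eigenvalues i) = p * ⨅ i, hherm_n.eigenvalues i := by
    have h1 : (⨅ i, hherm_np.eigenvalues i) = sInf (Set.range hherm_np.eigenvalues) := rfl
    have h2 : (⨅ i, hherm_n.eigenvalues i) = sInf (Set.range hherm_n.eigenvalues) := rfl
    rw [h1, h2, hset, Real.sInf_smul_of_nonneg (by positivity), smul_eq_mul]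
  have hsigma : sigmaMin (cycVdm (n * p)) = Real.sqrt p * sigmaMin (cycVdm n) := by
    rw [sigmaMin, sigmaMin, hinf, Real.sqrt_mul (by positivity)]
  rw [SD, SD, hsigma]
  have hfold : ‖(cycVdm (n * p)).det‖ ^ ((1 : ℝ) / (((n * p).totient : ℕ) : ℝ))
      = C ^ ((1 : ℝ) / (N : ℝ)) := rfl
  have hfold2 : ‖(cycVdm n).det‖ ^ ((1 : ℝ) / ((n.totient : ℕ) : ℝ))
      = c ^ ((1 : ℝ) / (φ : ℝ)) := rfl
  rw [hfold, hfold2, hnum]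
  exact mul_div_mul_left _ _ (by positivity : Real.sqrt p ≠ 0)

lemma SD_radical : ∀ m : ℕ, 1 ≤ m → SD m = SD (radical m) := by
  intro m
  induction m using Nat.strong_induction_on with
  | _ m ih =>
    intro hm
    by_cases hsf : Squarefree m
    · rw [radical, Nat.prod_primeFactors_of_squarefree hsf]
    · have hex : ∃ q, q.Prime ∧ q * q ∣ m := by
        by_contra hcon
        push_neg at hcon
        exact hsf (Nat.squarefree_iff_prime_squarefree.mpr hcon)
      obtain ⟨q, hql, hq2⟩ := hex
      have hqm : q ∣ m := (dvd_mul_right q q).trans hq2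
      have hmk : m = m / q * q := (Nat.div_mul_cancel hqm).symm
      set k := m / q with hk
      have hk1 : 1 ≤ k := by
        rcases Nat.eq_zero_or_pos k with h0 | h1
        · rw [h0] at hmk; omega
        · exact h1
      have hqk : q ∣ k := by
        have h2 : q * q ∣ k * q := hmk ▸ hq2
        exact (Nat.mul_dvd_mul_iff_right hql.pos).mp h2
      have hlt : k < m := by
        have h1 : 1 < q := hql.one_lt
        calc k < k * q := (Nat.lt_mul_iff_one_lt_right hk1).mpr h1
          _ = m := hmk.symm
      have hrad : radical k = radical m := by
        have hpf : k.primeFactors = m.primeFactors := by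
          ext r
          simp only [Nat.mem_primeFactors]
          constructor
          · rintro ⟨hr, hrk, -⟩
            exact ⟨hr, hrk.trans ⟨q, hmk⟩, by omega⟩
          · rintro ⟨hr, hrm, -⟩
            refine ⟨hr, ?_, by omega⟩
            have h3 : r ∣ k * q := hmk ▸ hrm
            rcases (Nat.Prime.dvd_mul hr).mp h3 with h | h
            · exact h
            · rw [(Nat.prime_dvd_prime_iff_eq hr hql).mp h]
              exact hqk
        rw [radical, radical, hpf]
      calc SD m = SD (k * q) := by rw [← hmk]
        _ = SD k := SD_mul_prime k q hk1 hql hqk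
        _ = SD (radical k) := ih k hlt hk1
        _ = SD (radical m) := by rw [hrad]

end SDAux

/-- For `n ≥ 1` and a prime `p ∣ n`, `SD(Φ_{np}) = SD(Φ_n)`; consequently
`SD(Φ_m) = SD(Φ_{rad m})` for all `m ≥ 1`. -/
theorem spectralDistortion_mul_prime_and_radical (n p : ℕ) (hn : 1 ≤ n)
    (hp : p.Prime) (hpn : p ∣ n) :
    SD (n * p) = SD n ∧ ∀ m : ℕ, 1 ≤ m → SD m = SD (radical m) :=
  ⟨SDAux.SD_mul_prime n p hn hp hpn, SDAux.SD_radical⟩
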